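/- Let g ∈ O(2,1), v⁰ ∈ ℝ³ with g v⁰ = v⁰, and u ∈ ℝ³ with ⟨u, v⁰⟩ ≠ 0. Let γ be the affine transformation x ↦ g x + u. Then for every nonzero integer n and every p ∈ ℝ³, γⁿ(p) ≠ p. In particular the cyclic group generated by γ is infinite and acts freely on ℝ³. -/

import Mathlib

/-- The Minkowski bilinear form on ℝ³: ⟨x,y⟩ = x₁y₁ + x₂y₂ − x₃y₃. -/
def minkowski (x y : Fin 3 → ℝ) : ℝ := x 0 * y 0 + x 1 * y 1 - x 2 * y 2

/-- If `g ∈ O(2,1)` fixes `v⁰` and `⟨u, v⁰⟩ ≠ 0`, then no nonzero power of the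
affine transformation `γ : x ↦ g x + u` has a fixed point; in particular the
cyclic group generated by `γ` is infinite and acts freely on ℝ³. -/
theorem nonzero_margulis_invariant_acts_freely
    (g : (Fin 3 → ℝ) ≃ₗ[ℝ] (Fin 3 → ℝ))
    (hO : ∀ x y : Fin 3 → ℝ, minkowski (g x) (g y) = minkowski x y)
    (v0 : Fin 3 → ℝ) (hfix : g v0 = v0)
    (u : Fin 3 → ℝ) (hmu : minkowski u v0 ≠ 0)
    (γ : (Fin 3 → ℝ) ≃ᵃ[ℝ] (Fin 3 → ℝ))
    (hγ : ∀ x : Fin 3 → ℝ, γ x = g x + u) :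
    (∀ n : ℤ, n ≠ 0 → ∀ p : Fin 3 → ℝ, (γ ^ n) p ≠ p) ∧
      ((Subgroup.zpowers γ : Set ((Fin 3 → ℝ) ≃ᵃ[ℝ] (Fin 3 → ℝ))).Infinite) ∧
      (∀ δ ∈ Subgroup.zpowers γ, δ ≠ 1 → ∀ p : Fin 3 → ℝ, δ p ≠ p) := by
  set c := minkowski u v0 with hc
  have step : ∀ x : Fin 3 → ℝ, minkowski (γ x) v0 = minkowski x v0 + c := by
    intro x
    have : minkowski (g x) v0 = minkowski x v0 := by
      conv_lhs => rw [← hfix]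
      exact hO x v0
    rw [hγ, hc]
    simp only [minkowski, Pi.add_apply] at this ⊢
    linarith
  have stepinv : ∀ x : Fin 3 → ℝ, minkowski (γ⁻¹ x) v0 = minkowski x v0 - c := by
    intro x
    have := step (γ⁻¹ x)
    have h2 : γ (γ⁻¹ x) = x := γ.apply_symm_apply x
    rw [h2] at this
    linarith
  have key : ∀ n : ℤ, ∀ p : Fin 3 → ℝ,
      minkowski ((γ ^ n) p) v0 = minkowski p v0 + n * c := by
    intro n
    induction n using Int.induction_on with
    | zero => intro p; simp
    | succ k ih =>
        intro p
        have h1 : (γ ^ ((k : ℤ) + 1)) p = γ ((γ ^ (k : ℤ)) p) := by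
          rw [add_comm, zpow_add, zpow_one]; rfl
        rw [h1, step, ih]
        push_cast; ring
    | pred k ih =>
        intro p
        have h1 : (γ ^ (-(k : ℤ) - 1)) p = γ⁻¹ ((γ ^ (-(k : ℤ))) p) := by
          rw [sub_eq_add_neg, add_comm, zpow_add, zpow_neg_one]; rfl
        rw [h1, stepinv, ih]
        push_cast; ring
  have free : ∀ n : ℤ, n ≠ 0 → ∀ p : Fin 3 → ℝ, (γ ^ n) p ≠ p := by
    intro n hn p hp
    have := key n p
    rw [hp] at this
    have : (n : ℝ) * c = 0 := by linarith
    rcases mul_eq_zero.mp this with h | h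
    · exact hn (by exact_mod_cast h)
    · exact hmu h
  refine ⟨free, ?_, ?_⟩
  · apply Set.infinite_of_injective_forall_mem
      (f := fun n : ℤ => γ ^ n)
    · intro a b hab
      simp only at hab
      by_contra hne
      have hnz : b - a ≠ 0 := sub_ne_zero.mpr (Ne.symm hne)
      have : γ ^ (b - a) = 1 := by
        rw [zpow_sub, hab, mul_inv_cancel]
      exact free (b - a) hnz 0 (by rw [this]; rfl)
    · intro n; exact Subgroup.zpow_mem _ (Subgroup.mem_zpowers γ) n
  · rintro δ hδ hδ1 p
    obtain ⟨n, rfl⟩ := Subgroup.mem_zpowers_iff.mp hδ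
    have hn : n ≠ 0 := by rintro rfl; simp at hδ1
    exact free n hn p
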